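/- Let n ≥ 3. In ℤⁿ, let M be the subgroup spanned by the vectors 4e_k (for 1 ≤ k ≤ n−1) together with 2·(e₁ + ⋯ + e_n), and let N be the subgroup spanned by the vectors 4e_i (for 1 ≤ i ≤ n) together with 2^{n−1}·(e₁ + ⋯ + e_n). Then N is contained in M and the quotient group M/N is cyclic of order 2. (This computation, with coordinates recording the diagonal coefficients d_i of quadratic forms Σd_iX_i², is the final step of Proposition 4.1 of the paper showing that the group of indecomposable degree 3 invariants of (SL₂)ⁿ/μ is ℤ/2ℤ.) -/

import Mathlib

/-- The lattice `M`, spanned by `4e_k` (`1 ≤ k ≤ n−1`) and `2(e₁ + ⋯ + e_n)`,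
recording the coefficient vectors of the generators `4X_k²`, `2ΣX_i²` of `S²(T_H^*)^W`. -/
def Mlat (n : ℕ) : Submodule ℤ (Fin n → ℤ) :=
  Submodule.span ℤ
    ((Set.range fun k : Fin (n - 1) => Pi.single (k.castLE (Nat.sub_le n 1)) (4 : ℤ)) ∪
      {fun _ : Fin n => (2 : ℤ)})

/-- The lattice `N`, spanned by `4e_i` (`1 ≤ i ≤ n`) and `2^{n−1}(e₁ + ⋯ + e_n)`,
recording the coefficient vectors of the Chern-class generators `4X_i²`, `2^{n−1}ΣX_i²`. -/
def Nlat (n : ℕ) : Submodule ℤ (Fin n → ℤ) :=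
  Submodule.span ℤ
    ((Set.range fun i : Fin n => Pi.single i (4 : ℤ)) ∪
      {fun _ : Fin n => (2 : ℤ) ^ (n - 1)})

/-- The final step of Proposition 4.1: for `n ≥ 3`, `N ⊆ M` and `M/N ≅ ℤ/2ℤ`. -/
theorem stmt_12 (n : ℕ) (hn : 3 ≤ n) :
    Nlat n ≤ Mlat n ∧
      Nonempty ((Mlat n ⧸ (Nlat n).comap (Mlat n).subtype) ≃+ ZMod 2) := by
  have hn0 : 0 < n := by omega
  set i0 : Fin n := ⟨0, hn0⟩ with hi0
  set v : Fin n → ℤ := fun _ => (2 : ℤ) with hv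
  have hvM : v ∈ Mlat n := Submodule.subset_span (Or.inr rfl)
  have hsingleN : ∀ i : Fin n, Pi.single i (4 : ℤ) ∈ Nlat n := fun i =>
    Submodule.subset_span (Or.inl ⟨i, rfl⟩)
  -- all coordinates divisible by 4 implies membership in N
  have hE : ∀ x : Fin n → ℤ, (∀ j, (4 : ℤ) ∣ x j) → x ∈ Nlat n := by
    intro x hx
    have hxe : x = ∑ j : Fin n, (x j / 4) • Pi.single j (4 : ℤ) := by
      funext i
      rw [Finset.sum_apply]
      simp only [Pi.smul_apply, Pi.single_apply, smul_eq_mul, mul_ite, mul_zero]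
      rw [Finset.sum_ite_eq Finset.univ i fun j => x j / 4 * 4]
      simp [Int.ediv_mul_cancel (hx i)]
    rw [hxe]
    exact Submodule.sum_mem _ fun j _ => Submodule.smul_mem _ _ (hsingleN j)
  -- every 4 e_i belongs to M
  have hsingleM : ∀ i : Fin n, Pi.single i (4 : ℤ) ∈ Mlat n := by
    intro i
    by_cases hi : (i : ℕ) < n - 1
    · exact Submodule.subset_span (Or.inl ⟨⟨i, hi⟩, rfl⟩)
    · have hieq : (i : ℕ) = n - 1 := by omega
      have key : Pi.single i (4 : ℤ)
          = (2 : ℤ) • v - ∑ k : Fin (n - 1), Pi.single (k.castLE (Nat.sub_le n 1)) (4 : ℤ) := by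
        funext j
        rw [Pi.sub_apply, Pi.smul_apply, Finset.sum_apply]
        simp only [Pi.single_apply, smul_eq_mul]
        by_cases hj : (j : ℕ) < n - 1
        · have hji : j ≠ i := by
            intro h; rw [h] at hj; omega
        
          have hjc : j = Fin.castLE (Nat.sub_le n 1) ⟨(j : ℕ), hj⟩ := Fin.ext rfl
          rw [Finset.sum_eq_single_of_mem (⟨(j : ℕ), hj⟩ : Fin (n - 1)) (Finset.mem_univ _)]
          · rw [if_neg hji, if_pos hjc]
            norm_num [hv]
          · intro b _ hb
            rw [if_neg]
            intro hc
            apply hb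
            apply Fin.ext
            have : (j : ℕ) = (b : ℕ) := by
              rw [hc]; rfl
            simp [← this]
        · have hji : j = i := Fin.ext (by omega)
          rw [if_pos hji, Finset.sum_eq_zero]
          · norm_num [hv]
          · intro b _
            rw [if_neg]
            intro hc
            have : (j : ℕ) = (b : ℕ) := by rw [hc]; rfl
            omega
      rw [key]
      exact Submodule.sub_mem _ (Submodule.smul_mem _ _ hvM)
        (Submodule.sum_mem _ fun k _ => Submodule.subset_span (Or.inl ⟨k, rfl⟩))
  -- N ≤ M
  have hNM : Nlat n ≤ Mlat n := by
    rw [Nlat, Submodule.span_le]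
    rintro x (⟨i, rfl⟩ | rfl)
    · exact hsingleM i
    · have hx : (fun _ : Fin n => (2 : ℤ) ^ (n - 1)) = (2 : ℤ) ^ (n - 2) • v := by
        funext j
        simp only [Pi.smul_apply, smul_eq_mul, hv]
        rw [← pow_succ]
        congr 1
        omega
      rw [hx]
      exact Submodule.smul_mem _ _ hvM
  -- coordinates of elements of M are congruent mod 4
  have hA : ∀ x, x ∈ Mlat n → ∀ j, (4 : ℤ) ∣ (x j - x i0) := by
    intro x hx
    induction hx using Submodule.span_induction with
    | mem x h =>
      intro j
      rcases h with ⟨k, rfl⟩ | rfl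
      · simp only [Pi.single_apply]
        split <;> split <;> norm_num
      · simp
    | zero => intro j; simp
    | add x y hx hy ihx ihy =>
      intro j
      have := dvd_add (ihx j) (ihy j)
      convert this using 1
      · rfl
      simp only [Pi.add_apply]; ring
    | smul a x hx ih =>
      intro j
      have := (ih j).mul_left a
      convert this using 1
      · rfl
      simp only [Pi.smul_apply, smul_eq_mul]; ring
  -- first coordinate of elements of M is even
  have hMeven : ∀ x, x ∈ Mlat n → (2 : ℤ) ∣ x i0 := by
    intro x hx
    induction hx using Submodule.span_induction with
    | mem x h =>
      rcases h with ⟨k, rfl⟩ | rfl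
      · simp only [Pi.single_apply]
        split <;> norm_num
      · exact ⟨1, by norm_num⟩
    | zero => simp
    | add x y hx hy ihx ihy => exact dvd_add ihx ihy
    | smul a x hx ih => exact (ih.mul_left a)
  -- first coordinate of elements of N is divisible by 4
  have hD : ∀ x, x ∈ Nlat n → (4 : ℤ) ∣ x i0 := by
    intro x hx
    induction hx using Submodule.span_induction with
    | mem x h =>
      rcases h with ⟨k, rfl⟩ | rfl
      · simp only [Pi.single_apply]
        split <;> norm_num
      · refine ⟨2 ^ (n - 3), ?_⟩
        show (2:ℤ) ^ (n-1) = 4 * 2 ^ (n-3)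
        rw [show (4:ℤ) = 2 ^ 2 by norm_num, ← pow_add]
        congr 1
        omega
    | zero => simp
    | add x y hx hy ihx ihy => exact dvd_add ihx ihy
    | smul a x hx ih => exact ih.mul_left a
  -- the homomorphism M → ℤ/2
  let f : (Mlat n) →+ ZMod 2 := AddMonoidHom.mk'
    (fun x => (((x : Fin n → ℤ) i0 / 2 : ℤ) : ZMod 2)) (by
      rintro ⟨x, hx⟩ ⟨y, hy⟩
      obtain ⟨a, ha⟩ := hMeven x hx
      obtain ⟨b, hb⟩ := hMeven y hy
      show ((((x + y) i0) / 2 : ℤ) : ZMod 2) = ((x i0 / 2 : ℤ) : ZMod 2) + ((y i0 / 2 : ℤ) : ZMod 2)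
      rw [Pi.add_apply, ha, hb, show (2 * a + 2 * b : ℤ) = 2 * (a + b) by ring,
        Int.mul_ediv_cancel_left _ two_ne_zero, Int.mul_ediv_cancel_left _ two_ne_zero,
        Int.mul_ediv_cancel_left _ two_ne_zero]
      push_cast
      ring)
  let flin : (Mlat n) →ₗ[ℤ] ZMod 2 := f.toIntLinearMap
  have hsurj : Function.Surjective flin := by
    intro z
    have hz : ∀ w : ZMod 2, w = 0 ∨ w = 1 := by decide
    rcases hz z with rfl | rfl
    · exact ⟨0, map_zero _⟩
    · refine ⟨⟨v, hvM⟩, ?_⟩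
      show (((2 : ℤ) / 2 : ℤ) : ZMod 2) = 1
      norm_num
  have hker : LinearMap.ker flin = (Nlat n).comap (Mlat n).subtype := by
    ext ⟨x, hx⟩
    simp only [LinearMap.mem_ker, Submodule.mem_comap, Submodule.subtype_apply]
    constructor
    · intro h
      have h2 : (2 : ℤ) ∣ x i0 / 2 := by
        have := (ZMod.intCast_zmod_eq_zero_iff_dvd (x i0 / 2) 2).mp h
        exact_mod_cast this
      obtain ⟨a, ha⟩ := hMeven x hx
      have h4 : (4 : ℤ) ∣ x i0 := by
        rw [ha, Int.mul_ediv_cancel_left _ two_ne_zero] at h2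
        obtain ⟨b, hb⟩ := h2
        exact ⟨b, by rw [ha, hb]; ring⟩
      exact hE x fun j => (by have := hA x hx j; omega)
    · intro h
      have h4 : (4 : ℤ) ∣ x i0 := hD x h
      obtain ⟨a, ha⟩ := h4
      show (((x i0) / 2 : ℤ) : ZMod 2) = 0
      rw [ha, show (4 * a : ℤ) = 2 * (2 * a) by ring, Int.mul_ediv_cancel_left _ two_ne_zero]
      rw [ZMod.intCast_zmod_eq_zero_iff_dvd]
      exact ⟨a, by push_cast; ring⟩
  refine ⟨hNM, ⟨?_⟩⟩
  exact ((Submodule.quotEquivOfEq _ _ hker.symm).trans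
    (flin.quotKerEquivOfSurjective hsurj)).toAddEquiv
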